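/- arXiv:math/0404153 — 2 statements merged into one kernel-verified Lean document; each statement's English description precedes it below -/
import Mathlib

section
/- Let (X, 𝒪_n) be an operator space. Then 𝒲_max satisfies the condition (OW): for every n ≥ 1 and every x ∈ M_n(X), 𝒲_max([[0, x],[0, 0]]) = (1/2) 𝒪_n(x), where [[0,x],[0,0]] ∈ M_{2n}(X) is the block matrix with x in the upper-right n×n corner and zeros elsewhere. Consequently 𝒲_max is a numerical radius norm affiliated with (X, 𝒪_n). -/
open scoped ComplexOrder Matrix ENNReal TensorProduct

universe u v

noncomputable section

/-- The block-diagonal sum `x ⊕ y` of two square matrices. -/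
def blockDiag {X : Type*} [Zero X] {m n : ℕ} (x : Matrix (Fin m) (Fin m) X)
    (y : Matrix (Fin n) (Fin n) X) : Matrix (Fin (m + n)) (Fin (m + n)) X :=
  Matrix.submatrix (Matrix.fromBlocks x 0 0 y) finSumFinEquiv.symm finSumFinEquiv.symm

/-- The block matrix `[[0, x], [0, 0]]` with `x` in the upper-right corner. -/
def cornerBlock {X : Type*} [Zero X] {n : ℕ} (x : Matrix (Fin n) (Fin n) X) :
    Matrix (Fin (n + n)) (Fin (n + n)) X :=
  Matrix.submatrix (Matrix.fromBlocks 0 x 0 0) finSumFinEquiv.symm finSumFinEquiv.symm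

/-- Multiplication `α x` of a scalar matrix with a matrix over a ℂ-module. -/
def scalarMulLeft {X : Type*} [AddCommMonoid X] [Module ℂ X] {m n k : ℕ}
    (α : Matrix (Fin m) (Fin n) ℂ) (x : Matrix (Fin n) (Fin k) X) :
    Matrix (Fin m) (Fin k) X :=
  Matrix.of fun i j => ∑ l, α i l • x l j

/-- Multiplication `x β` of a matrix over a ℂ-module with a scalar matrix. -/
def scalarMulRight {X : Type*} [AddCommMonoid X] [Module ℂ X] {m n k : ℕ}
    (x : Matrix (Fin m) (Fin n) X) (β : Matrix (Fin n) (Fin k) ℂ) :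
    Matrix (Fin m) (Fin k) X :=
  Matrix.of fun i j => ∑ l, β l j • x i l

/-- Operator norm of a rectangular complex matrix, as an operator ℓ²(Fin n) → ℓ²(Fin m). -/
def matOpNorm {m n : ℕ} (α : Matrix (Fin m) (Fin n) ℂ) : ℝ :=
  ‖LinearMap.toContinuousLinearMap (Matrix.toEuclideanLin α)‖

/-- The numerical radius of a bounded operator on a complex inner product space. -/
def numRadius {H : Type*} [NormedAddCommGroup H] [InnerProductSpace ℂ H]
    (a : H →L[ℂ] H) : ℝ :=
  ⨆ ξ : {ξ : H // ‖ξ‖ ≤ 1}, ‖(inner ℂ (ξ : H) (a ξ) : ℂ)‖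

/-- The bounded operator `Hⁿ → Hᵐ` induced by an `m × n` matrix of bounded operators,
where `Hⁿ` carries the ℓ²-direct sum structure. -/
def matOpRect {H : Type*} [NormedAddCommGroup H] [InnerProductSpace ℂ H] {m n : ℕ}
    (a : Matrix (Fin m) (Fin n) (H →L[ℂ] H)) :
    (PiLp 2 fun _ : Fin n => H) →L[ℂ] (PiLp 2 fun _ : Fin m => H) :=
  ((PiLp.continuousLinearEquiv 2 ℂ (fun _ : Fin m => H)).symm.toContinuousLinearMap) ∘L
    (ContinuousLinearMap.pi fun i => ∑ j, (a i j).comp (ContinuousLinearMap.proj j)) ∘L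
    ((PiLp.continuousLinearEquiv 2 ℂ (fun _ : Fin n => H)).toContinuousLinearMap)

/-- The bounded operator on `Hⁿ` induced by an `n × n` matrix of bounded operators. -/
def matOp {H : Type*} [NormedAddCommGroup H] [InnerProductSpace ℂ H] {n : ℕ}
    (a : Matrix (Fin n) (Fin n) (H →L[ℂ] H)) :
    (PiLp 2 fun _ : Fin n => H) →L[ℂ] (PiLp 2 fun _ : Fin n => H) :=
  matOpRect a

/-- The numerical radius of a complex `n × n` matrix, acting on `ℂⁿ`. -/
def matNumRadius {n : ℕ} (a : Matrix (Fin n) (Fin n) ℂ) : ℝ :=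
  numRadius (LinearMap.toContinuousLinearMap (Matrix.toEuclideanLin a))

/-- The identification of `M_k(M_n(ℂ))` with `M_{kn}(ℂ)`. -/
def flatten {k n : ℕ} (x : Matrix (Fin k) (Fin k) (Matrix (Fin n) (Fin n) ℂ)) :
    Matrix (Fin (k * n)) (Fin (k * n)) ℂ :=
  Matrix.of fun i j =>
    x (finProdFinEquiv.symm i).1 (finProdFinEquiv.symm j).1
      (finProdFinEquiv.symm i).2 (finProdFinEquiv.symm j).2

/-- An (abstract) numerical radius operator space: a complex vector space `X` together with a
norm `W n` on each matrix space `M_n(X)` satisfying the conditions (WI) and (WII). -/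
structure NRNorm (X : Type u) [AddCommGroup X] [Module ℂ X] where
  W : ∀ n : ℕ, Matrix (Fin n) (Fin n) X → ℝ
  nonneg : ∀ (n : ℕ) (x : Matrix (Fin n) (Fin n) X), 0 ≤ W n x
  eq_zero_iff : ∀ (n : ℕ) (x : Matrix (Fin n) (Fin n) X), W n x = 0 ↔ x = 0
  add_le : ∀ (n : ℕ) (x y : Matrix (Fin n) (Fin n) X), W n (x + y) ≤ W n x + W n y
  smul_eq : ∀ (n : ℕ) (c : ℂ) (x : Matrix (Fin n) (Fin n) X), W n (c • x) = ‖c‖ * W n x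
  cond_WI : ∀ (m n : ℕ) (x : Matrix (Fin m) (Fin m) X) (y : Matrix (Fin n) (Fin n) X),
    W (m + n) (blockDiag x y) = max (W m x) (W n y)
  cond_WII : ∀ (m n : ℕ) (α : Matrix (Fin n) (Fin m) ℂ) (x : Matrix (Fin m) (Fin m) X),
    W n (scalarMulRight (scalarMulLeft α x) αᴴ) ≤ matOpNorm α ^ 2 * W m x

/-- An (abstract) operator space: a complex vector space `X` together with a norm `O n` on each
matrix space `M_n(X)` satisfying Ruan's axioms (OI) and (OII). -/
structure OSNorm (X : Type u) [AddCommGroup X] [Module ℂ X] where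
  O : ∀ n : ℕ, Matrix (Fin n) (Fin n) X → ℝ
  nonneg : ∀ (n : ℕ) (x : Matrix (Fin n) (Fin n) X), 0 ≤ O n x
  eq_zero_iff : ∀ (n : ℕ) (x : Matrix (Fin n) (Fin n) X), O n x = 0 ↔ x = 0
  add_le : ∀ (n : ℕ) (x y : Matrix (Fin n) (Fin n) X), O n (x + y) ≤ O n x + O n y
  smul_eq : ∀ (n : ℕ) (c : ℂ) (x : Matrix (Fin n) (Fin n) X), O n (c • x) = ‖c‖ * O n x
  cond_OI : ∀ (m n : ℕ) (x : Matrix (Fin m) (Fin m) X) (y : Matrix (Fin n) (Fin n) X),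
    O (m + n) (blockDiag x y) = max (O m x) (O n y)
  cond_OII : ∀ (m n : ℕ) (α : Matrix (Fin n) (Fin m) ℂ) (x : Matrix (Fin m) (Fin m) X)
    (β : Matrix (Fin m) (Fin n) ℂ),
    O n (scalarMulRight (scalarMulLeft α x) β) ≤ matOpNorm α * O m x * matOpNorm β

/-- The completely bounded norm (valued in `[0, ∞]`) of a linear map, with respect to given
matrix norm sequences on the domain and the codomain. -/
def cbNorm {X Y : Type*} (WX : ∀ n : ℕ, Matrix (Fin n) (Fin n) X → ℝ)
    (WY : ∀ n : ℕ, Matrix (Fin n) (Fin n) Y → ℝ) (φ : X → Y) : ℝ≥0∞ :=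
  ⨆ (n : ℕ) (x : Matrix (Fin n) (Fin n) X) (_ : WX n x ≤ 1),
    ENNReal.ofReal (WY n (x.map φ))

/-- The maximal numerical radius norm affiliated with an operator space `(X, 𝒪_n)`. -/
def Wmax {X : Type u} [AddCommGroup X] [Module ℂ X] (OS : OSNorm X)
    (n : ℕ) (x : Matrix (Fin n) (Fin n) X) : ℝ :=
  sInf {t | ∃ (r : ℕ) (a : Matrix (Fin n) (Fin r) ℂ) (y : Matrix (Fin r) (Fin r) X)
      (b : Matrix (Fin r) (Fin n) ℂ),
    x = scalarMulRight (scalarMulLeft a y) b ∧ OS.O r y = 1 ∧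
      t = (1 / 2) * matOpNorm (a * aᴴ + bᴴ * b)}

/-- A complex Hilbert space together with a linear map of `X` into its bounded operators. -/
structure HilbertRep (X : Type u) [AddCommGroup X] [Module ℂ X] where
  H : Type u
  [instN : NormedAddCommGroup H]
  [instI : InnerProductSpace ℂ H]
  [instC : CompleteSpace H]
  Φ : X →ₗ[ℂ] (H →L[ℂ] H)

attribute [instance] HilbertRep.instN HilbertRep.instI HilbertRep.instC

end
set_option linter.unusedSectionVars false
noncomputable section
namespace NRAux
open Matrix
open scoped Matrix.Norms.L2Operator

variable {X : Type u} [AddCommGroup X] [Module ℂ X]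

def vcat {α : Type v} {m n k : ℕ} (a : Matrix (Fin m) (Fin k) α) (b : Matrix (Fin n) (Fin k) α) :
    Matrix (Fin (m + n)) (Fin k) α :=
  (Matrix.fromRows a b).submatrix finSumFinEquiv.symm id

def hcat {α : Type v} {m n k : ℕ} (a : Matrix (Fin k) (Fin m) α) (b : Matrix (Fin k) (Fin n) α) :
    Matrix (Fin k) (Fin (m + n)) α :=
  (Matrix.fromCols a b).submatrix id finSumFinEquiv.symm

lemma fromBlocks_eq {α : Type v} {m n p q : ℕ} (A : Matrix (Fin m) (Fin p) α)
    (B : Matrix (Fin m) (Fin q) α) (C : Matrix (Fin n) (Fin p) α) (D : Matrix (Fin n) (Fin q) α) :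
    (Matrix.fromBlocks A B C D).submatrix finSumFinEquiv.symm finSumFinEquiv.symm
      = hcat (vcat A C) (vcat B D) := by
  ext i j
  cases h1 : finSumFinEquiv.symm i <;> cases h2 : finSumFinEquiv.symm j <;>
    simp [hcat, vcat, h1, h2]

lemma fromBlocks_eq' {α : Type v} {m n p q : ℕ} (A : Matrix (Fin m) (Fin p) α)
    (B : Matrix (Fin m) (Fin q) α) (C : Matrix (Fin n) (Fin p) α) (D : Matrix (Fin n) (Fin q) α) :
    (Matrix.fromBlocks A B C D).submatrix finSumFinEquiv.symm finSumFinEquiv.symm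
      = vcat (hcat A B) (hcat C D) := by
  ext i j
  cases h1 : finSumFinEquiv.symm i <;> cases h2 : finSumFinEquiv.symm j <;>
    simp [hcat, vcat, h1, h2]

lemma blockDiag_eq {m n : ℕ} (x : Matrix (Fin m) (Fin m) X) (y : Matrix (Fin n) (Fin n) X) :
    blockDiag x y = hcat (vcat x 0) (vcat 0 y) := fromBlocks_eq x 0 0 y

lemma blockDiag_eq' {m n : ℕ} (x : Matrix (Fin m) (Fin m) X) (y : Matrix (Fin n) (Fin n) X) :
    blockDiag x y = vcat (hcat x 0) (hcat 0 y) := fromBlocks_eq' x 0 0 y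

lemma cornerBlock_eq {n : ℕ} (x : Matrix (Fin n) (Fin n) X) :
    cornerBlock x = hcat (vcat 0 0) (vcat x 0) := fromBlocks_eq 0 x 0 0

lemma cornerBlock_eq' {n : ℕ} (x : Matrix (Fin n) (Fin n) X) :
    cornerBlock x = vcat (hcat 0 x) (hcat 0 0) := fromBlocks_eq' 0 x 0 0

lemma vcat_zero {α : Type v} [Zero α] {m n k : ℕ} :
    (vcat (0 : Matrix (Fin m) (Fin k) α) (0 : Matrix (Fin n) (Fin k) α)) = 0 := by
  ext i j; cases h : finSumFinEquiv.symm i <;> simp [vcat, h]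

lemma hcat_zero {α : Type v} [Zero α] {m n k : ℕ} :
    (hcat (0 : Matrix (Fin k) (Fin m) α) (0 : Matrix (Fin k) (Fin n) α)) = 0 := by
  ext i j; cases h : finSumFinEquiv.symm j <;> simp [hcat, h]

lemma vcat_add {α : Type v} [AddCommMonoid α] {m n k : ℕ} (a c : Matrix (Fin m) (Fin k) α)
    (b d : Matrix (Fin n) (Fin k) α) : vcat a b + vcat c d = vcat (a + c) (b + d) := by
  ext i j; cases h : finSumFinEquiv.symm i <;> simp [vcat, h]

lemma hcat_add {α : Type v} [AddCommMonoid α] {m n k : ℕ} (a c : Matrix (Fin k) (Fin m) α)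
    (b d : Matrix (Fin k) (Fin n) α) : hcat a b + hcat c d = hcat (a + c) (b + d) := by
  ext i j; cases h : finSumFinEquiv.symm j <;> simp [hcat, h]

-- matrix multiplication lemmas over ℂ
lemma hcat_mul_vcat {m n k p : ℕ} (a : Matrix (Fin k) (Fin m) ℂ) (b : Matrix (Fin k) (Fin n) ℂ)
    (c : Matrix (Fin m) (Fin p) ℂ) (d : Matrix (Fin n) (Fin p) ℂ) :
    hcat a b * vcat c d = a * c + b * d := by
  have := Matrix.submatrix_mul_equiv (Matrix.fromCols a b) (Matrix.fromRows c d)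
    (id : Fin k → Fin k) finSumFinEquiv.symm (id : Fin p → Fin p)
  rw [hcat, vcat, this, Matrix.fromCols_mul_fromRows, Matrix.submatrix_id_id]

lemma vcat_mul_hcat {m n k p q : ℕ} (a : Matrix (Fin m) (Fin k) ℂ) (b : Matrix (Fin n) (Fin k) ℂ)
    (c : Matrix (Fin k) (Fin p) ℂ) (d : Matrix (Fin k) (Fin q) ℂ) :
    vcat a b * hcat c d =
      (Matrix.fromBlocks (a * c) (a * d) (b * c) (b * d)).submatrix
        finSumFinEquiv.symm finSumFinEquiv.symm := by
  have := Matrix.submatrix_mul_equiv (Matrix.fromRows a b) (Matrix.fromCols c d)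
    (finSumFinEquiv.symm : Fin (m + n) → Fin m ⊕ Fin n) (Equiv.refl (Fin k))
    (finSumFinEquiv.symm : Fin (p + q) → Fin p ⊕ Fin q)
  rw [vcat, hcat]
  calc (Matrix.fromRows a b).submatrix finSumFinEquiv.symm id *
        (Matrix.fromCols c d).submatrix id finSumFinEquiv.symm
      = (Matrix.fromRows a b).submatrix finSumFinEquiv.symm (Equiv.refl (Fin k)) *
        (Matrix.fromCols c d).submatrix (Equiv.refl (Fin k)) finSumFinEquiv.symm := rfl
    _ = _ := by rw [this, Matrix.fromRows_mul_fromCols]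

lemma vcat_mul {m n k p : ℕ} (a : Matrix (Fin m) (Fin k) ℂ) (b : Matrix (Fin n) (Fin k) ℂ)
    (c : Matrix (Fin k) (Fin p) ℂ) : vcat a b * c = vcat (a * c) (b * c) := by
  have := Matrix.submatrix_mul_equiv (Matrix.fromRows a b) c
    (finSumFinEquiv.symm : Fin (m + n) → Fin m ⊕ Fin n) (Equiv.refl (Fin k))
    (id : Fin p → Fin p)
  rw [vcat, vcat]
  calc (Matrix.fromRows a b).submatrix finSumFinEquiv.symm id * c
      = (Matrix.fromRows a b).submatrix finSumFinEquiv.symm (Equiv.refl (Fin k)) *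
        c.submatrix (Equiv.refl (Fin k)) id := rfl
    _ = _ := by rw [this, Matrix.fromRows_mul]

lemma mul_hcat {m n k p : ℕ} (c : Matrix (Fin p) (Fin k) ℂ) (a : Matrix (Fin k) (Fin m) ℂ)
    (b : Matrix (Fin k) (Fin n) ℂ) : c * hcat a b = hcat (c * a) (c * b) := by
  have := Matrix.submatrix_mul_equiv c (Matrix.fromCols a b)
    (id : Fin p → Fin p) (Equiv.refl (Fin k))
    (finSumFinEquiv.symm : Fin (m + n) → Fin m ⊕ Fin n)
  rw [hcat, hcat]
  calc c * (Matrix.fromCols a b).submatrix id finSumFinEquiv.symm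
      = c.submatrix id (Equiv.refl (Fin k)) *
        (Matrix.fromCols a b).submatrix (Equiv.refl (Fin k)) finSumFinEquiv.symm := rfl
    _ = _ := by rw [this, Matrix.mul_fromCols]

lemma vcat_conjTranspose {m n k : ℕ} (a : Matrix (Fin m) (Fin k) ℂ)
    (b : Matrix (Fin n) (Fin k) ℂ) : (vcat a b)ᴴ = hcat aᴴ bᴴ := by
  rw [vcat, hcat, Matrix.conjTranspose_submatrix,
    Matrix.conjTranspose_fromRows_eq_fromCols_conjTranspose]

lemma hcat_conjTranspose {m n k : ℕ} (a : Matrix (Fin k) (Fin m) ℂ)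
    (b : Matrix (Fin k) (Fin n) ℂ) : (hcat a b)ᴴ = vcat aᴴ bᴴ := by
  rw [vcat, hcat, Matrix.conjTranspose_submatrix,
    Matrix.conjTranspose_fromCols_eq_fromRows_conjTranspose]

end NRAux
end

noncomputable section
namespace NRAux
open Matrix

variable {X : Type u} [AddCommGroup X] [Module ℂ X]

lemma sml_apply {m n k : ℕ} (α : Matrix (Fin m) (Fin n) ℂ) (x : Matrix (Fin n) (Fin k) X)
    (i j) : scalarMulLeft α x i j = ∑ l, α i l • x l j := rfl

lemma smr_apply {m n k : ℕ} (x : Matrix (Fin m) (Fin n) X) (β : Matrix (Fin n) (Fin k) ℂ)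
    (i j) : scalarMulRight x β i j = ∑ l, β l j • x i l := rfl

lemma sml_one {n k : ℕ} (x : Matrix (Fin n) (Fin k) X) : scalarMulLeft 1 x = x := by
  ext i j
  rw [sml_apply]
  simp [Matrix.one_apply, ite_smul]

lemma smr_one {m n : ℕ} (x : Matrix (Fin m) (Fin n) X) : scalarMulRight x 1 = x := by
  ext i j
  rw [smr_apply]
  simp [Matrix.one_apply, ite_smul]

lemma sml_zero {m n k : ℕ} (x : Matrix (Fin n) (Fin k) X) :
    scalarMulLeft (0 : Matrix (Fin m) (Fin n) ℂ) x = 0 := by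
  ext i j; rw [sml_apply]; simp

lemma sml_zero' {m n k : ℕ} (α : Matrix (Fin m) (Fin n) ℂ) :
    scalarMulLeft α (0 : Matrix (Fin n) (Fin k) X) = 0 := by
  ext i j; rw [sml_apply]; simp

lemma smr_zero {m n k : ℕ} (x : Matrix (Fin m) (Fin n) X) :
    scalarMulRight x (0 : Matrix (Fin n) (Fin k) ℂ) = 0 := by
  ext i j; rw [smr_apply]; simp

lemma smr_zero' {m n k : ℕ} (β : Matrix (Fin n) (Fin k) ℂ) :
    scalarMulRight (0 : Matrix (Fin m) (Fin n) X) β = 0 := by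
  ext i j; rw [smr_apply]; simp

lemma sml_add {m n k : ℕ} (α : Matrix (Fin m) (Fin n) ℂ) (x y : Matrix (Fin n) (Fin k) X) :
    scalarMulLeft α (x + y) = scalarMulLeft α x + scalarMulLeft α y := by
  ext i j
  simp [sml_apply, smul_add, Finset.sum_add_distrib]

lemma smr_add {m n k : ℕ} (x y : Matrix (Fin m) (Fin n) X) (β : Matrix (Fin n) (Fin k) ℂ) :
    scalarMulRight (x + y) β = scalarMulRight x β + scalarMulRight y β := by
  ext i j
  simp [smr_apply, smul_add, Finset.sum_add_distrib]

lemma sml_smul {m n k : ℕ} (c : ℂ) (α : Matrix (Fin m) (Fin n) ℂ)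
    (x : Matrix (Fin n) (Fin k) X) :
    scalarMulLeft (c • α) x = c • scalarMulLeft α x := by
  ext i j
  simp [sml_apply, Finset.smul_sum, smul_smul]

lemma sml_smul' {m n k : ℕ} (c : ℂ) (α : Matrix (Fin m) (Fin n) ℂ)
    (x : Matrix (Fin n) (Fin k) X) :
    scalarMulLeft α (c • x) = c • scalarMulLeft α x := by
  ext i j
  simp [sml_apply, Finset.smul_sum, smul_smul, mul_comm]

lemma smr_smul {m n k : ℕ} (c : ℂ) (x : Matrix (Fin m) (Fin n) X)
    (β : Matrix (Fin n) (Fin k) ℂ) :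
    scalarMulRight x (c • β) = c • scalarMulRight x β := by
  ext i j
  simp [smr_apply, Finset.smul_sum, smul_smul]

lemma smr_smul' {m n k : ℕ} (c : ℂ) (x : Matrix (Fin m) (Fin n) X)
    (β : Matrix (Fin n) (Fin k) ℂ) :
    scalarMulRight (c • x) β = c • scalarMulRight x β := by
  ext i j
  simp [smr_apply, Finset.smul_sum, smul_smul, mul_comm]

lemma sml_mul {m n k p : ℕ} (α : Matrix (Fin m) (Fin n) ℂ) (β : Matrix (Fin n) (Fin k) ℂ)
    (x : Matrix (Fin k) (Fin p) X) :
    scalarMulLeft (α * β) x = scalarMulLeft α (scalarMulLeft β x) := by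
  ext i j
  simp only [sml_apply, Matrix.mul_apply, Finset.sum_smul, Finset.smul_sum, smul_smul]
  rw [Finset.sum_comm]

lemma smr_mul {m n k p : ℕ} (x : Matrix (Fin m) (Fin n) X) (β : Matrix (Fin n) (Fin k) ℂ)
    (γ : Matrix (Fin k) (Fin p) ℂ) :
    scalarMulRight x (β * γ) = scalarMulRight (scalarMulRight x β) γ := by
  ext i j
  simp only [smr_apply, Matrix.mul_apply, Finset.sum_smul, Finset.smul_sum, smul_smul]
  rw [Finset.sum_comm]
  simp [mul_comm]

lemma sml_smr_assoc {m n k p : ℕ} (α : Matrix (Fin m) (Fin n) ℂ) (x : Matrix (Fin n) (Fin k) X)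
    (β : Matrix (Fin k) (Fin p) ℂ) :
    scalarMulLeft α (scalarMulRight x β) = scalarMulRight (scalarMulLeft α x) β := by
  ext i j
  simp only [sml_apply, smr_apply, Finset.smul_sum, smul_smul]
  rw [Finset.sum_comm]
  simp [mul_comm]

lemma sml_vcat {m n k p : ℕ} (α : Matrix (Fin m) (Fin k) ℂ) (β : Matrix (Fin n) (Fin k) ℂ)
    (x : Matrix (Fin k) (Fin p) X) :
    scalarMulLeft (vcat α β) x = vcat (scalarMulLeft α x) (scalarMulLeft β x) := by
  ext i j
  cases h : finSumFinEquiv.symm i <;>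
    simp [sml_apply, vcat, h]

lemma sml_hcat {m n k p : ℕ} (α : Matrix (Fin m) (Fin k) ℂ)
    (x : Matrix (Fin k) (Fin n) X) (y : Matrix (Fin k) (Fin p) X) :
    scalarMulLeft α (hcat x y) = hcat (scalarMulLeft α x) (scalarMulLeft α y) := by
  ext i j
  cases h : finSumFinEquiv.symm j <;>
    simp [sml_apply, hcat, h]

lemma smr_vcat {m n k p : ℕ} (x : Matrix (Fin m) (Fin k) X) (y : Matrix (Fin n) (Fin k) X)
    (β : Matrix (Fin k) (Fin p) ℂ) :
    scalarMulRight (vcat x y) β = vcat (scalarMulRight x β) (scalarMulRight y β) := by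
  ext i j
  cases h : finSumFinEquiv.symm i <;>
    simp [smr_apply, vcat, h]

lemma smr_hcat {m n k p : ℕ} (x : Matrix (Fin m) (Fin k) X)
    (α : Matrix (Fin k) (Fin n) ℂ) (β : Matrix (Fin k) (Fin p) ℂ) :
    scalarMulRight x (hcat α β) = hcat (scalarMulRight x α) (scalarMulRight x β) := by
  ext i j
  cases h : finSumFinEquiv.symm j <;>
    simp [smr_apply, hcat, h]

lemma sml_hcat_vcat {m n k p : ℕ} (α : Matrix (Fin k) (Fin m) ℂ) (β : Matrix (Fin k) (Fin n) ℂ)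
    (x : Matrix (Fin m) (Fin p) X) (y : Matrix (Fin n) (Fin p) X) :
    scalarMulLeft (hcat α β) (vcat x y) = scalarMulLeft α x + scalarMulLeft β y := by
  ext i j
  show (∑ l, hcat α β i l • vcat x y l j) = _
  rw [← Equiv.sum_comp finSumFinEquiv (fun l => hcat α β i l • vcat x y l j),
    Fintype.sum_sum_type]
  simp [hcat, vcat, sml_apply]

lemma smr_hcat_vcat {m n k p : ℕ} (x : Matrix (Fin k) (Fin m) X) (y : Matrix (Fin k) (Fin n) X)
    (α : Matrix (Fin m) (Fin p) ℂ) (β : Matrix (Fin n) (Fin p) ℂ) :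
    scalarMulRight (hcat x y) (vcat α β) = scalarMulRight x α + scalarMulRight y β := by
  ext i j
  show (∑ l, vcat α β l j • hcat x y i l) = _
  rw [← Equiv.sum_comp finSumFinEquiv (fun l => vcat α β l j • hcat x y i l),
    Fintype.sum_sum_type]
  simp [hcat, vcat, smr_apply]

end NRAux
end

noncomputable section
namespace NRAux
open Matrix ContinuousLinearMap
open scoped Matrix.Norms.L2Operator InnerProductSpace ComplexOrder

def toCLM {m n : ℕ} (A : Matrix (Fin m) (Fin n) ℂ) :
    EuclideanSpace ℂ (Fin n) →L[ℂ] EuclideanSpace ℂ (Fin m) :=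
  LinearMap.toContinuousLinearMap (Matrix.toEuclideanLin A)

lemma matOpNorm_eq {m n : ℕ} (A : Matrix (Fin m) (Fin n) ℂ) : matOpNorm A = ‖A‖ := rfl

lemma norm_toCLM {m n : ℕ} (A : Matrix (Fin m) (Fin n) ℂ) : ‖A‖ = ‖toCLM A‖ := rfl

lemma toCLM_apply {m n : ℕ} (A : Matrix (Fin m) (Fin n) ℂ) (v : EuclideanSpace ℂ (Fin n)) :
    toCLM A v = (WithLp.equiv 2 (Fin m → ℂ)).symm (A *ᵥ (WithLp.equiv 2 (Fin n → ℂ)) v) := rfl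

lemma toCLM_mul {m n k : ℕ} (A : Matrix (Fin m) (Fin n) ℂ) (B : Matrix (Fin n) (Fin k) ℂ) :
    toCLM (A * B) = (toCLM A).comp (toCLM B) := by
  ext v
  simp [toCLM_apply, Matrix.mulVec_mulVec]

lemma toCLM_add {m n : ℕ} (A B : Matrix (Fin m) (Fin n) ℂ) :
    toCLM (A + B) = toCLM A + toCLM B := by
  unfold toCLM; rw [map_add, map_add]

lemma toCLM_adjoint {m n : ℕ} (A : Matrix (Fin m) (Fin n) ℂ) :
    toCLM Aᴴ = ContinuousLinearMap.adjoint (toCLM A) := by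
  unfold toCLM
  rw [Matrix.toEuclideanLin_conjTranspose_eq_adjoint, LinearMap.adjoint_toContinuousLinearMap]

lemma sq_opNorm_le_of {E F : Type} [NormedAddCommGroup E] [InnerProductSpace ℂ E]
    [NormedAddCommGroup F] [InnerProductSpace ℂ F] [CompleteSpace E] [CompleteSpace F]
    (f : F →L[ℂ] E) (g : E →L[ℂ] F) :
    ‖f‖ ^ 2 ≤ ‖f ∘L ContinuousLinearMap.adjoint f + ContinuousLinearMap.adjoint g ∘L g‖ ∧
    ‖g‖ ^ 2 ≤ ‖f ∘L ContinuousLinearMap.adjoint f + ContinuousLinearMap.adjoint g ∘L g‖ := by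
  set T := f ∘L ContinuousLinearMap.adjoint f + ContinuousLinearMap.adjoint g ∘L g with hT
  have key : ∀ x : E, ‖ContinuousLinearMap.adjoint f x‖ ^ 2 + ‖g x‖ ^ 2 ≤ ‖T‖ * ‖x‖ ^ 2 := by
    intro x
    have h1 : RCLike.re (⟪x, T x⟫_ℂ) = ‖ContinuousLinearMap.adjoint f x‖ ^ 2 + ‖g x‖ ^ 2 := by
      have e1 : (⟪x, f (ContinuousLinearMap.adjoint f x)⟫_ℂ)
          = ⟪ContinuousLinearMap.adjoint f x, ContinuousLinearMap.adjoint f x⟫_ℂ :=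
        (ContinuousLinearMap.adjoint_inner_left f (ContinuousLinearMap.adjoint f x) x).symm
      have e2 : (⟪x, ContinuousLinearMap.adjoint g (g x)⟫_ℂ) = ⟪g x, g x⟫_ℂ :=
        ContinuousLinearMap.adjoint_inner_right g x (g x)
      rw [hT]
      simp only [ContinuousLinearMap.add_apply, inner_add_right,
        ContinuousLinearMap.comp_apply, e1, e2, map_add]
      rw [inner_self_eq_norm_sq (𝕜 := ℂ), inner_self_eq_norm_sq (𝕜 := ℂ)]
    have h2 : RCLike.re (⟪x, T x⟫_ℂ) ≤ ‖T‖ * ‖x‖ ^ 2 := by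
      calc RCLike.re (⟪x, T x⟫_ℂ) ≤ |RCLike.re (⟪x, T x⟫_ℂ)| := le_abs_self _
        _ ≤ ‖(⟪x, T x⟫_ℂ)‖ := RCLike.abs_re_le_norm _
        _ ≤ ‖x‖ * ‖T x‖ := norm_inner_le_norm _ _
        _ ≤ ‖x‖ * (‖T‖ * ‖x‖) := by
            have := T.le_opNorm x
            have hx : (0:ℝ) ≤ ‖x‖ := norm_nonneg _
            nlinarith
        _ = ‖T‖ * ‖x‖ ^ 2 := by ring
    linarith [h1 ▸ h2]
  have hTnn : (0:ℝ) ≤ ‖T‖ := norm_nonneg _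
  have bound : ∀ x : E, ‖ContinuousLinearMap.adjoint f x‖ ≤ Real.sqrt ‖T‖ * ‖x‖ ∧
      ‖g x‖ ≤ Real.sqrt ‖T‖ * ‖x‖ := by
    intro x
    have h := key x
    have hs : Real.sqrt ‖T‖ * Real.sqrt ‖T‖ = ‖T‖ := Real.mul_self_sqrt hTnn
    have hnn1 : (0:ℝ) ≤ ‖ContinuousLinearMap.adjoint f x‖ := norm_nonneg _
    have hnn2 : (0:ℝ) ≤ ‖g x‖ := norm_nonneg _
    have hnn3 : (0:ℝ) ≤ Real.sqrt ‖T‖ * ‖x‖ :=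
      mul_nonneg (Real.sqrt_nonneg _) (norm_nonneg _)
    constructor <;> nlinarith [sq_nonneg (‖ContinuousLinearMap.adjoint f x‖ - Real.sqrt ‖T‖ * ‖x‖),
      sq_nonneg (‖g x‖ - Real.sqrt ‖T‖ * ‖x‖), sq_nonneg ‖x‖]
  have hadj : ‖ContinuousLinearMap.adjoint f‖ ≤ Real.sqrt ‖T‖ :=
    ContinuousLinearMap.opNorm_le_bound _ (Real.sqrt_nonneg _) fun x => (bound x).1
  have hg : ‖g‖ ≤ Real.sqrt ‖T‖ :=
    ContinuousLinearMap.opNorm_le_bound _ (Real.sqrt_nonneg _) fun x => (bound x).2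
  have hfnorm : ‖f‖ = ‖ContinuousLinearMap.adjoint f‖ :=
    (ContinuousLinearMap.adjoint.norm_map f).symm
  have hs : Real.sqrt ‖T‖ ^ 2 = ‖T‖ := Real.sq_sqrt hTnn
  constructor
  · rw [hfnorm, ← hs]
    have : (0:ℝ) ≤ ‖ContinuousLinearMap.adjoint f‖ := norm_nonneg _
    nlinarith [Real.sqrt_nonneg ‖T‖]
  · rw [← hs]
    have : (0:ℝ) ≤ ‖g‖ := norm_nonneg _
    nlinarith [Real.sqrt_nonneg ‖T‖]

lemma norm_sq_le_left {N r : ℕ} (a : Matrix (Fin N) (Fin r) ℂ) (b : Matrix (Fin r) (Fin N) ℂ) :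
    ‖a‖ ^ 2 ≤ ‖a * aᴴ + bᴴ * b‖ := by
  have hrep : toCLM (a * aᴴ + bᴴ * b) =
      toCLM a ∘L ContinuousLinearMap.adjoint (toCLM a) +
        ContinuousLinearMap.adjoint (toCLM b) ∘L toCLM b := by
    rw [toCLM_add, toCLM_mul, toCLM_mul, toCLM_adjoint, toCLM_adjoint]
  have h := (sq_opNorm_le_of (toCLM a) (toCLM b)).1
  rw [← hrep] at h
  calc ‖a‖ ^ 2 = ‖toCLM a‖ ^ 2 := by rw [norm_toCLM]
    _ ≤ ‖toCLM (a * aᴴ + bᴴ * b)‖ := h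
    _ = ‖a * aᴴ + bᴴ * b‖ := (norm_toCLM _).symm

lemma norm_sq_le_right {N r : ℕ} (a : Matrix (Fin N) (Fin r) ℂ) (b : Matrix (Fin r) (Fin N) ℂ) :
    ‖b‖ ^ 2 ≤ ‖a * aᴴ + bᴴ * b‖ := by
  have hrep : toCLM (a * aᴴ + bᴴ * b) =
      toCLM a ∘L ContinuousLinearMap.adjoint (toCLM a) +
        ContinuousLinearMap.adjoint (toCLM b) ∘L toCLM b := by
    rw [toCLM_add, toCLM_mul, toCLM_mul, toCLM_adjoint, toCLM_adjoint]
  have h := (sq_opNorm_le_of (toCLM a) (toCLM b)).2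
  rw [← hrep] at h
  calc ‖b‖ ^ 2 = ‖toCLM b‖ ^ 2 := by rw [norm_toCLM]
    _ ≤ ‖toCLM (a * aᴴ + bᴴ * b)‖ := h
    _ = ‖a * aᴴ + bᴴ * b‖ := (norm_toCLM _).symm

lemma norm_mul_norm_le {N r : ℕ} (a : Matrix (Fin N) (Fin r) ℂ) (b : Matrix (Fin r) (Fin N) ℂ) :
    ‖a‖ * ‖b‖ ≤ ‖a * aᴴ + bᴴ * b‖ := by
  have h1 := norm_sq_le_left a b
  have h2 := norm_sq_le_right a b
  have h3 : (0:ℝ) ≤ ‖a‖ := norm_nonneg _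
  have h4 : (0:ℝ) ≤ ‖b‖ := norm_nonneg _
  nlinarith [sq_nonneg (‖a‖ - ‖b‖)]

lemma matrix_norm_one_le {N : ℕ} : ‖(1 : Matrix (Fin N) (Fin N) ℂ)‖ ≤ 1 := by
  rw [Matrix.cstar_norm_def, _root_.map_one, ContinuousLinearMap.one_def]
  exact ContinuousLinearMap.norm_id_le

lemma matrix_norm_one_eq {N : ℕ} (hN : 0 < N) : ‖(1 : Matrix (Fin N) (Fin N) ℂ)‖ = 1 := by
  refine le_antisymm matrix_norm_one_le ?_
  set v : EuclideanSpace ℂ (Fin N) := EuclideanSpace.single (⟨0, hN⟩ : Fin N) (1:ℂ) with hv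
  have hvn : ‖v‖ = 1 := by simp [hv, EuclideanSpace.norm_single]
  have h := Matrix.l2_opNorm_mulVec (1 : Matrix (Fin N) (Fin N) ℂ) v
  rw [hvn, mul_one] at h
  calc (1:ℝ) = ‖v‖ := hvn.symm
    _ = ‖(EuclideanSpace.equiv (Fin N) ℂ).symm ((1 : Matrix (Fin N) (Fin N) ℂ) *ᵥ v)‖ := by
        congr 1
        show v = _
        rw [Matrix.one_mulVec]
        rfl
    _ ≤ ‖(1 : Matrix (Fin N) (Fin N) ℂ)‖ := h

end NRAux
end

noncomputable section
namespace NRAux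
open Matrix ContinuousLinearMap
open scoped Matrix.Norms.L2Operator

def inj1 (m n : ℕ) : Matrix (Fin (m + n)) (Fin m) ℂ := vcat 1 0

def inj2 (m n : ℕ) : Matrix (Fin (m + n)) (Fin n) ℂ := vcat 0 1

lemma inj1_ct_mul (m n : ℕ) : (inj1 m n)ᴴ * inj1 m n = 1 := by
  rw [inj1, vcat_conjTranspose, hcat_mul_vcat]
  simp

lemma inj2_ct_mul (m n : ℕ) : (inj2 m n)ᴴ * inj2 m n = 1 := by
  rw [inj2, vcat_conjTranspose, hcat_mul_vcat]
  simp

lemma norm_le_one_of_ct_mul {m n : ℕ} (A : Matrix (Fin m) (Fin n) ℂ) (h : Aᴴ * A = 1) :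
    ‖A‖ ≤ 1 := by
  have h1 : ‖Aᴴ * A‖ = ‖A‖ * ‖A‖ := Matrix.l2_opNorm_conjTranspose_mul_self A
  rw [h] at h1
  have h2 : ‖(1 : Matrix (Fin n) (Fin n) ℂ)‖ ≤ 1 := matrix_norm_one_le
  have h3 : (0:ℝ) ≤ ‖A‖ := norm_nonneg _
  nlinarith

lemma norm_inj1_le (m n : ℕ) : ‖inj1 m n‖ ≤ 1 :=
  norm_le_one_of_ct_mul _ (inj1_ct_mul m n)

lemma norm_inj2_le (m n : ℕ) : ‖inj2 m n‖ ≤ 1 :=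
  norm_le_one_of_ct_mul _ (inj2_ct_mul m n)

lemma submatrix_add_submatrix {m n : ℕ} (P Q : Matrix (Fin m ⊕ Fin n) (Fin m ⊕ Fin n) ℂ) :
    P.submatrix finSumFinEquiv.symm finSumFinEquiv.symm
      + Q.submatrix finSumFinEquiv.symm finSumFinEquiv.symm
      = (P + Q).submatrix finSumFinEquiv.symm finSumFinEquiv.symm := by
  ext i j
  simp

lemma inj_mul_ct_add (m n : ℕ) :
    inj1 m n * (inj1 m n)ᴴ + inj2 m n * (inj2 m n)ᴴ = 1 := by
  have h1 : inj1 m n * (inj1 m n)ᴴ = (Matrix.fromBlocks (1 : Matrix (Fin m) (Fin m) ℂ) 0 0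
      (0 : Matrix (Fin n) (Fin n) ℂ)).submatrix finSumFinEquiv.symm finSumFinEquiv.symm := by
    rw [inj1, vcat_conjTranspose, vcat_mul_hcat]
    simp
  have h2 : inj2 m n * (inj2 m n)ᴴ = (Matrix.fromBlocks (0 : Matrix (Fin m) (Fin m) ℂ) 0 0
      (1 : Matrix (Fin n) (Fin n) ℂ)).submatrix finSumFinEquiv.symm finSumFinEquiv.symm := by
    rw [inj2, vcat_conjTranspose, vcat_mul_hcat]
    simp
  rw [h1, h2, submatrix_add_submatrix, Matrix.fromBlocks_add]
  simp only [add_zero, zero_add]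
  rw [Matrix.fromBlocks_one, Matrix.submatrix_one_equiv]

-- squared euclidean norm of a finite family
lemma eucl_norm_sq {k : ℕ} (w : EuclideanSpace ℂ (Fin k)) : ‖w‖ ^ 2 = ∑ i, ‖w i‖ ^ 2 := by
  rw [EuclideanSpace.norm_eq, Real.sq_sqrt]
  positivity

lemma toCLM_apply_coord {m n : ℕ} (A : Matrix (Fin m) (Fin n) ℂ) (v : EuclideanSpace ℂ (Fin n))
    (i : Fin m) : toCLM A v i = (A *ᵥ v) i := rfl

lemma norm_dsum_le {N N' : ℕ} (C : Matrix (Fin N) (Fin N) ℂ) (C' : Matrix (Fin N') (Fin N') ℂ) :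
    ‖(Matrix.fromBlocks C 0 0 C').submatrix finSumFinEquiv.symm finSumFinEquiv.symm‖
      ≤ max ‖C‖ ‖C'‖ := by
  set D : Matrix (Fin (N + N')) (Fin (N + N')) ℂ :=
    (Matrix.fromBlocks C 0 0 C').submatrix finSumFinEquiv.symm finSumFinEquiv.symm with hD
  set s := max ‖C‖ ‖C'‖ with hs
  have hsnn : (0:ℝ) ≤ s := le_max_of_le_left (norm_nonneg _)
  rw [norm_toCLM]
  refine ContinuousLinearMap.opNorm_le_bound _ hsnn fun v => ?_
  set u₁ : EuclideanSpace ℂ (Fin N) :=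
    (WithLp.equiv 2 (Fin N → ℂ)).symm (fun i => v (finSumFinEquiv (Sum.inl i))) with hu₁
  set u₂ : EuclideanSpace ℂ (Fin N') :=
    (WithLp.equiv 2 (Fin N' → ℂ)).symm (fun i => v (finSumFinEquiv (Sum.inr i))) with hu₂
  have hD1 : ∀ i : Fin N, (D *ᵥ v) (finSumFinEquiv (Sum.inl i)) = (C *ᵥ u₁) i := by
    intro i
    show (∑ k, D (finSumFinEquiv (Sum.inl i)) k * v k) = _
    rw [← Equiv.sum_comp finSumFinEquiv
      (fun k => D (finSumFinEquiv (Sum.inl i)) k * v k), Fintype.sum_sum_type]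
    simp [hD, Matrix.mulVec, dotProduct, hu₁]
  have hD2 : ∀ i : Fin N', (D *ᵥ v) (finSumFinEquiv (Sum.inr i)) = (C' *ᵥ u₂) i := by
    intro i
    show (∑ k, D (finSumFinEquiv (Sum.inr i)) k * v k) = _
    rw [← Equiv.sum_comp finSumFinEquiv
      (fun k => D (finSumFinEquiv (Sum.inr i)) k * v k), Fintype.sum_sum_type]
    simp [hD, Matrix.mulVec, dotProduct, hu₂]
  have hsplit : ∀ w : EuclideanSpace ℂ (Fin (N + N')),
      ‖w‖ ^ 2 = (∑ i : Fin N, ‖w (finSumFinEquiv (Sum.inl i))‖ ^ 2)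
        + ∑ i : Fin N', ‖w (finSumFinEquiv (Sum.inr i))‖ ^ 2 := by
    intro w
    rw [eucl_norm_sq, ← Equiv.sum_comp finSumFinEquiv (fun k => ‖w k‖ ^ 2),
      Fintype.sum_sum_type]
  have hv : ‖v‖ ^ 2 = ‖u₁‖ ^ 2 + ‖u₂‖ ^ 2 := by
    rw [hsplit v, eucl_norm_sq, eucl_norm_sq]
    rfl
  have hTv : ‖toCLM D v‖ ^ 2 = ‖toCLM C u₁‖ ^ 2 + ‖toCLM C' u₂‖ ^ 2 := by
    rw [hsplit (toCLM D v), eucl_norm_sq, eucl_norm_sq]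
    congr 1
    · refine Finset.sum_congr rfl fun i _ => ?_
      rw [toCLM_apply_coord, toCLM_apply_coord, hD1]
    · refine Finset.sum_congr rfl fun i _ => ?_
      rw [toCLM_apply_coord, toCLM_apply_coord, hD2]
  have h1 : ‖toCLM C u₁‖ ≤ ‖C‖ * ‖u₁‖ := by
    rw [norm_toCLM] at *
    exact (toCLM C).le_opNorm u₁
  have h2 : ‖toCLM C' u₂‖ ≤ ‖C'‖ * ‖u₂‖ := by
    rw [norm_toCLM] at *
    exact (toCLM C').le_opNorm u₂
  have hC1 : ‖C‖ ≤ s := le_max_left _ _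
  have hC2 : ‖C'‖ ≤ s := le_max_right _ _
  have hres : ‖toCLM D v‖ ^ 2 ≤ (s * ‖v‖) ^ 2 := by
    have e1 : (0:ℝ) ≤ ‖u₁‖ := norm_nonneg _
    have e2 : (0:ℝ) ≤ ‖u₂‖ := norm_nonneg _
    have e3 : (0:ℝ) ≤ ‖toCLM C u₁‖ := norm_nonneg _
    have e4 : (0:ℝ) ≤ ‖toCLM C' u₂‖ := norm_nonneg _
    have e5 : (0:ℝ) ≤ ‖C‖ := norm_nonneg _
    have e6 : (0:ℝ) ≤ ‖C'‖ := norm_nonneg _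
    rw [hTv]
    have q1 : ‖toCLM C u₁‖ ^ 2 ≤ (s * ‖u₁‖) ^ 2 :=
      le_trans (pow_le_pow_left₀ e3 h1 2)
        (pow_le_pow_left₀ (mul_nonneg e5 e1) (mul_le_mul_of_nonneg_right hC1 e1) 2)
    have q2 : ‖toCLM C' u₂‖ ^ 2 ≤ (s * ‖u₂‖) ^ 2 :=
      le_trans (pow_le_pow_left₀ e4 h2 2)
        (pow_le_pow_left₀ (mul_nonneg e6 e2) (mul_le_mul_of_nonneg_right hC2 e2) 2)
    have : (s * ‖u₁‖) ^ 2 + (s * ‖u₂‖) ^ 2 = s ^ 2 * (‖u₁‖ ^ 2 + ‖u₂‖ ^ 2) := by ring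
    rw [← hv] at this
    calc ‖toCLM C u₁‖ ^ 2 + ‖toCLM C' u₂‖ ^ 2 ≤ (s * ‖u₁‖) ^ 2 + (s * ‖u₂‖) ^ 2 := by linarith
      _ = s ^ 2 * ‖v‖ ^ 2 := this
      _ = (s * ‖v‖) ^ 2 := by ring
  have hnn : (0:ℝ) ≤ ‖toCLM D v‖ := norm_nonneg _
  have hnn2 : (0:ℝ) ≤ s * ‖v‖ := mul_nonneg hsnn (norm_nonneg _)
  nlinarith

end NRAux
end

noncomputable section
namespace NRAux
open Matrix
open scoped Matrix.Norms.L2Operator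

variable {X : Type u} [AddCommGroup X] [Module ℂ X]

def WS (OS : OSNorm X) (n : ℕ) (x : Matrix (Fin n) (Fin n) X) : Set ℝ :=
  {t | ∃ (r : ℕ) (a : Matrix (Fin n) (Fin r) ℂ) (y : Matrix (Fin r) (Fin r) X)
      (b : Matrix (Fin r) (Fin n) ℂ),
    x = scalarMulRight (scalarMulLeft a y) b ∧ OS.O r y = 1 ∧
      t = (1 / 2) * matOpNorm (a * aᴴ + bᴴ * b)}

lemma Wmax_eq_sInf (OS : OSNorm X) (n : ℕ) (x : Matrix (Fin n) (Fin n) X) :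
    Wmax OS n x = sInf (WS OS n x) := rfl

lemma mem_nonneg {OS : OSNorm X} {n : ℕ} {x : Matrix (Fin n) (Fin n) X} {t : ℝ}
    (ht : t ∈ WS OS n x) : 0 ≤ t := by
  obtain ⟨r, a, y, b, _, _, rfl⟩ := ht
  rw [matOpNorm_eq]
  positivity

lemma WS_bdd (OS : OSNorm X) (n : ℕ) (x : Matrix (Fin n) (Fin n) X) :
    BddBelow (WS OS n x) := ⟨0, fun _ ht => mem_nonneg ht⟩

lemma Wmax_nonneg (OS : OSNorm X) (n : ℕ) (x : Matrix (Fin n) (Fin n) X) :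
    0 ≤ Wmax OS n x :=
  Real.sInf_nonneg fun _ ht => mem_nonneg ht

lemma Wmax_le_mem {OS : OSNorm X} {n : ℕ} {x : Matrix (Fin n) (Fin n) X} {t : ℝ}
    (ht : t ∈ WS OS n x) : Wmax OS n x ≤ t :=
  csInf_le (WS_bdd OS n x) ht

lemma mem_lb {OS : OSNorm X} {n : ℕ} {x : Matrix (Fin n) (Fin n) X} {t : ℝ}
    (ht : t ∈ WS OS n x) : (1 / 2) * OS.O n x ≤ t := by
  obtain ⟨r, a, y, b, hx, hy, rfl⟩ := ht
  have h1 := OS.cond_OII r n a y b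
  rw [← hx, hy, mul_one] at h1
  have h2 : matOpNorm a * matOpNorm b ≤ matOpNorm (a * aᴴ + bᴴ * b) := by
    rw [matOpNorm_eq, matOpNorm_eq, matOpNorm_eq]
    exact norm_mul_norm_le a b
  linarith

lemma nonempty_of_ne {OS : OSNorm X} {n : ℕ} {x : Matrix (Fin n) (Fin n) X} (hx : x ≠ 0) :
    (WS OS n x).Nonempty := by
  set c := OS.O n x with hc
  have hc0 : 0 < c :=
    lt_of_le_of_ne (OS.nonneg n x) fun h => hx ((OS.eq_zero_iff n x).mp h.symm)
  set s : ℂ := ((Real.sqrt c : ℝ) : ℂ) with hs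
  have hss : s * s = (c : ℂ) := by
    rw [hs, ← Complex.ofReal_mul, Real.mul_self_sqrt hc0.le]
  refine ⟨_, n, s • 1, ((c : ℂ))⁻¹ • x, s • 1, ?_, ?_, rfl⟩
  · rw [sml_smul, sml_smul', sml_one, smr_smul, smr_one, smul_smul, smul_smul, hss,
      mul_inv_cancel₀ ((Complex.ofReal_ne_zero).mpr hc0.ne'), one_smul]
  · rw [OS.smul_eq, ← hc]
    have : ‖((c : ℂ))⁻¹‖ = c⁻¹ := by
      rw [norm_inv, Complex.norm_real, Real.norm_eq_abs, abs_of_pos hc0]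
    rw [this, inv_mul_cancel₀ hc0.ne']

lemma Wmax_zero (OS : OSNorm X) (n : ℕ) : Wmax OS n (0 : Matrix (Fin n) (Fin n) X) = 0 := by
  rcases Set.eq_empty_or_nonempty (WS OS n (0 : Matrix (Fin n) (Fin n) X)) with h | h
  · rw [Wmax_eq_sInf, h, Real.sInf_empty]
  · obtain ⟨t, r, a, y, b, _, hy, _⟩ := h
    have h0 : (0 : ℝ) ∈ WS OS n (0 : Matrix (Fin n) (Fin n) X) := by
      refine ⟨r, 0, y, 0, ?_, hy, ?_⟩
      · rw [sml_zero, smr_zero']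
      · simp [matOpNorm_eq]
    exact le_antisymm (Wmax_le_mem h0) (Wmax_nonneg OS n 0)

lemma Wmax_lb (OS : OSNorm X) (n : ℕ) (x : Matrix (Fin n) (Fin n) X) :
    (1 / 2) * OS.O n x ≤ Wmax OS n x := by
  by_cases hx : x = 0
  · rw [hx, Wmax_zero, (OS.eq_zero_iff n 0).mpr rfl]
    norm_num
  · exact le_csInf (nonempty_of_ne hx) fun t ht => mem_lb ht

lemma Wmax_eq_zero_iff (OS : OSNorm X) (n : ℕ) (x : Matrix (Fin n) (Fin n) X) :
    Wmax OS n x = 0 ↔ x = 0 := by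
  constructor
  · intro h
    have h1 := Wmax_lb OS n x
    rw [h] at h1
    have h2 := OS.nonneg n x
    exact (OS.eq_zero_iff n x).mp (by linarith)
  · rintro rfl
    exact Wmax_zero OS n

lemma Wmax_add_le (OS : OSNorm X) (n : ℕ) (x x' : Matrix (Fin n) (Fin n) X) :
    Wmax OS n (x + x') ≤ Wmax OS n x + Wmax OS n x' := by
  by_cases hx : x = 0
  · rw [hx, zero_add, Wmax_zero, zero_add]
  by_cases hx' : x' = 0
  · rw [hx', add_zero, Wmax_zero, add_zero]
  have hne := nonempty_of_ne (OS := OS) hx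
  have hne' := nonempty_of_ne (OS := OS) hx'
  have key : ∀ t ∈ WS OS n x, ∀ t' ∈ WS OS n x', Wmax OS n (x + x') ≤ t + t' := by
    rintro t ⟨r, a, y, b, hxe, hy, ht⟩ t' ⟨r', a', y', b', hx'e, hy', ht'⟩
    have hmem : (1 / 2) * matOpNorm ((hcat a a') * (hcat a a')ᴴ
        + (vcat b b')ᴴ * (vcat b b')) ∈ WS OS n (x + x') := by
      refine ⟨r + r', hcat a a', blockDiag y y', vcat b b', ?_, ?_, rfl⟩
      · rw [blockDiag_eq', sml_hcat_vcat, sml_hcat, sml_hcat, sml_zero', sml_zero',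
          smr_add, smr_hcat_vcat, smr_hcat_vcat, smr_zero', smr_zero', add_zero, zero_add,
          ← hxe, ← hx'e]
      · rw [OS.cond_OI, hy, hy', max_self]
    have step := Wmax_le_mem hmem
    have e1 : hcat a a' * (hcat a a')ᴴ = a * aᴴ + a' * a'ᴴ := by
      rw [hcat_conjTranspose, hcat_mul_vcat]
    have e2 : (vcat b b')ᴴ * vcat b b' = bᴴ * b + b'ᴴ * b' := by
      rw [vcat_conjTranspose, hcat_mul_vcat]
    have e3 : matOpNorm (hcat a a' * (hcat a a')ᴴ + (vcat b b')ᴴ * vcat b b')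
        ≤ matOpNorm (a * aᴴ + bᴴ * b) + matOpNorm (a' * a'ᴴ + b'ᴴ * b') := by
      rw [e1, e2, matOpNorm_eq, matOpNorm_eq, matOpNorm_eq]
      calc ‖a * aᴴ + a' * a'ᴴ + (bᴴ * b + b'ᴴ * b')‖
          = ‖(a * aᴴ + bᴴ * b) + (a' * a'ᴴ + b'ᴴ * b')‖ := by rw [add_add_add_comm]
        _ ≤ _ := norm_add_le _ _
    rw [ht, ht']
    linarith
  have h2 : ∀ t ∈ WS OS n x, Wmax OS n (x + x') - t ≤ Wmax OS n x' := fun t ht =>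
    le_csInf hne' fun t' ht' => by have := key t ht t' ht'; linarith
  have h3 : Wmax OS n (x + x') - Wmax OS n x' ≤ Wmax OS n x :=
    le_csInf hne fun t ht => by have := h2 t ht; linarith
  linarith

lemma smul_mem {OS : OSNorm X} {n : ℕ} {x : Matrix (Fin n) (Fin n) X} {t : ℝ}
    (ht : t ∈ WS OS n x) {c : ℂ} (hc : c ≠ 0) : ‖c‖ * t ∈ WS OS n (c • x) := by
  obtain ⟨r, a, y, b, hx, hy, htt⟩ := ht
  set d : ℂ := Complex.exp (Complex.log c / 2) with hd
  have hdd : d * d = c := by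
    rw [hd, ← Complex.exp_add, add_halves, Complex.exp_log hc]
  have hnd : ‖d‖ * ‖d‖ = ‖c‖ := by rw [← norm_mul, hdd]
  have hdc : d * star d = (‖c‖ : ℂ) := by
    rw [show (star d) = (starRingEnd ℂ) d from rfl, Complex.mul_conj, Complex.normSq_eq_norm_sq,
      ← hnd]
    push_cast
    ring
  refine ⟨r, d • a, y, d • b, ?_, hy, ?_⟩
  · rw [sml_smul, smr_smul, smr_smul', smul_smul, hdd, ← hx]

  · have e1 : (d • a) * (d • a)ᴴ = (‖c‖ : ℂ) • (a * aᴴ) := by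
      rw [Matrix.conjTranspose_smul, Matrix.smul_mul, Matrix.mul_smul, smul_smul, hdc]
    have e2 : (d • b)ᴴ * (d • b) = (‖c‖ : ℂ) • (bᴴ * b) := by
      rw [Matrix.conjTranspose_smul, Matrix.smul_mul, Matrix.mul_smul, smul_smul,
        mul_comm (star d) d, hdc]
    rw [e1, e2, ← smul_add, htt, matOpNorm_eq, matOpNorm_eq, norm_smul]
    have : ‖((‖c‖ : ℝ) : ℂ)‖ = ‖c‖ := by
      rw [Complex.norm_real, Real.norm_eq_abs, abs_of_nonneg (norm_nonneg c)]
    rw [this]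
    ring

lemma Wmax_smul_le (OS : OSNorm X) (n : ℕ) (x : Matrix (Fin n) (Fin n) X) {c : ℂ}
    (hc : c ≠ 0) : Wmax OS n (c • x) ≤ ‖c‖ * Wmax OS n x := by
  by_cases hx : x = 0
  · rw [hx, smul_zero, Wmax_zero]
    simp
  have hne := nonempty_of_ne (OS := OS) hx
  have hcpos : 0 < ‖c‖ := norm_pos_iff.mpr hc
  have h1 : Wmax OS n (c • x) / ‖c‖ ≤ Wmax OS n x := by
    refine le_csInf hne fun t ht => ?_
    have h2 := Wmax_le_mem (smul_mem ht hc)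
    rw [div_le_iff₀ hcpos]
    linarith [mul_comm t ‖c‖]
  rw [div_le_iff₀ hcpos] at h1
  linarith [mul_comm (Wmax OS n x) ‖c‖]

lemma Wmax_smul (OS : OSNorm X) (n : ℕ) (c : ℂ) (x : Matrix (Fin n) (Fin n) X) :
    Wmax OS n (c • x) = ‖c‖ * Wmax OS n x := by
  by_cases hc : c = 0
  · rw [hc, zero_smul, Wmax_zero, norm_zero, zero_mul]
  refine le_antisymm (Wmax_smul_le OS n x hc) ?_
  have h2 := Wmax_smul_le OS n (c • x) (inv_ne_zero hc)
  rw [smul_smul, inv_mul_cancel₀ hc, one_smul, norm_inv] at h2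
  have hcpos : 0 < ‖c‖ := norm_pos_iff.mpr hc
  calc ‖c‖ * Wmax OS n x ≤ ‖c‖ * (‖c‖⁻¹ * Wmax OS n (c • x)) :=
      mul_le_mul_of_nonneg_left h2 hcpos.le
    _ = Wmax OS n (c • x) := by rw [← mul_assoc, mul_inv_cancel₀ (ne_of_gt hcpos), one_mul]

lemma Wmax_conj_le (OS : OSNorm X) {m n : ℕ} (α : Matrix (Fin n) (Fin m) ℂ)
    (x : Matrix (Fin m) (Fin m) X) :
    Wmax OS n (scalarMulRight (scalarMulLeft α x) αᴴ) ≤ matOpNorm α ^ 2 * Wmax OS m x := by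
  by_cases hx : x = 0
  · rw [hx, sml_zero', smr_zero', Wmax_zero, Wmax_zero, mul_zero]
  by_cases hα : matOpNorm α = 0
  · have hα0 : α = 0 := by
      rw [matOpNorm_eq] at hα
      exact norm_eq_zero.mp hα
    rw [hα0, sml_zero, smr_zero', Wmax_zero, matOpNorm_eq, norm_zero]
    have := Wmax_nonneg OS m x
    nlinarith
  have hαpos : 0 < matOpNorm α := by
    rw [matOpNorm_eq] at *
    exact lt_of_le_of_ne (norm_nonneg _) (Ne.symm hα)
  have hne := nonempty_of_ne (OS := OS) hx
  have key : ∀ t ∈ WS OS m x,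
      Wmax OS n (scalarMulRight (scalarMulLeft α x) αᴴ) ≤ matOpNorm α ^ 2 * t := by
    rintro t ⟨r, a, y, b, hxe, hy, ht⟩
    have hmem : (1 / 2) * matOpNorm ((α * a) * (α * a)ᴴ + (b * αᴴ)ᴴ * (b * αᴴ))
        ∈ WS OS n (scalarMulRight (scalarMulLeft α x) αᴴ) := by
      refine ⟨r, α * a, y, b * αᴴ, ?_, hy, rfl⟩
      rw [hxe, sml_smr_assoc, ← sml_mul, ← smr_mul]
    have hb := Wmax_le_mem hmem
    have e : (α * a) * (α * a)ᴴ + (b * αᴴ)ᴴ * (b * αᴴ)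
        = α * ((a * aᴴ + bᴴ * b) * αᴴ) := by
      simp only [Matrix.conjTranspose_mul, Matrix.conjTranspose_conjTranspose,
        Matrix.mul_add, Matrix.add_mul, Matrix.mul_assoc]
    have e2 : matOpNorm (α * ((a * aᴴ + bᴴ * b) * αᴴ))
        ≤ matOpNorm α ^ 2 * matOpNorm (a * aᴴ + bᴴ * b) := by
      simp only [matOpNorm_eq]
      have q1 := Matrix.l2_opNorm_mul α ((a * aᴴ + bᴴ * b) * αᴴ)
      have q2 := Matrix.l2_opNorm_mul (a * aᴴ + bᴴ * b) αᴴ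
      have q3 : ‖αᴴ‖ = ‖α‖ := Matrix.l2_opNorm_conjTranspose α
      have n1 : (0:ℝ) ≤ ‖α‖ := norm_nonneg _
      have n2 : (0:ℝ) ≤ ‖a * aᴴ + bᴴ * b‖ := norm_nonneg _
      rw [q3] at q2
      calc ‖α * ((a * aᴴ + bᴴ * b) * αᴴ)‖ ≤ ‖α‖ * ‖(a * aᴴ + bᴴ * b) * αᴴ‖ := q1
        _ ≤ ‖α‖ * (‖a * aᴴ + bᴴ * b‖ * ‖α‖) := by nlinarith
        _ = ‖α‖ ^ 2 * ‖a * aᴴ + bᴴ * b‖ := by ring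
    rw [e] at hb
    rw [ht]
    linarith
  have hsq : 0 < matOpNorm α ^ 2 := pow_pos hαpos 2
  have h1 : Wmax OS n (scalarMulRight (scalarMulLeft α x) αᴴ) / matOpNorm α ^ 2
      ≤ Wmax OS m x := by
    refine le_csInf hne fun t ht => ?_
    have := key t ht
    rw [div_le_iff₀ hsq]
    linarith [mul_comm t (matOpNorm α ^ 2)]
  rw [div_le_iff₀ hsq] at h1
  linarith [mul_comm (Wmax OS m x) (matOpNorm α ^ 2)]

end NRAux
end

noncomputable section
namespace NRAux
open Matrix
open scoped Matrix.Norms.L2Operator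

variable {X : Type u} [AddCommGroup X] [Module ℂ X]

lemma inj1_ct (m n : ℕ) : (inj1 m n)ᴴ
    = hcat (1 : Matrix (Fin m) (Fin m) ℂ) (0 : Matrix (Fin m) (Fin n) ℂ) := by
  rw [inj1, vcat_conjTranspose, Matrix.conjTranspose_one, Matrix.conjTranspose_zero]

lemma inj2_ct (m n : ℕ) : (inj2 m n)ᴴ
    = hcat (0 : Matrix (Fin n) (Fin m) ℂ) (1 : Matrix (Fin n) (Fin n) ℂ) := by
  rw [inj2, vcat_conjTranspose, Matrix.conjTranspose_one, Matrix.conjTranspose_zero]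

lemma matOpNorm_nonneg {m n : ℕ} (A : Matrix (Fin m) (Fin n) ℂ) : 0 ≤ matOpNorm A := by
  rw [matOpNorm_eq]; exact norm_nonneg _

lemma matOpNorm_inj1_le (m n : ℕ) : matOpNorm (inj1 m n) ≤ 1 := by
  rw [matOpNorm_eq]; exact norm_inj1_le m n

lemma matOpNorm_inj2_le (m n : ℕ) : matOpNorm (inj2 m n) ≤ 1 := by
  rw [matOpNorm_eq]; exact norm_inj2_le m n

lemma matOpNorm_ct {m n : ℕ} (A : Matrix (Fin m) (Fin n) ℂ) :
    matOpNorm Aᴴ = matOpNorm A := by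
  rw [matOpNorm_eq, matOpNorm_eq]; exact Matrix.l2_opNorm_conjTranspose A

lemma extract1 {m n : ℕ} (x : Matrix (Fin m) (Fin m) X) (y : Matrix (Fin n) (Fin n) X) :
    scalarMulRight (scalarMulLeft (inj1 m n)ᴴ (blockDiag x y)) (inj1 m n) = x := by
  rw [inj1_ct, inj1, blockDiag_eq', sml_hcat_vcat, sml_one, sml_zero, add_zero,
    smr_hcat_vcat, smr_one, smr_zero', add_zero]

lemma extract2 {m n : ℕ} (x : Matrix (Fin m) (Fin m) X) (y : Matrix (Fin n) (Fin n) X) :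
    scalarMulRight (scalarMulLeft (inj2 m n)ᴴ (blockDiag x y)) (inj2 m n) = y := by
  rw [inj2_ct, inj2, blockDiag_eq', sml_hcat_vcat, sml_one, sml_zero, zero_add,
    smr_hcat_vcat, smr_one, smr_zero', zero_add]

lemma rep_diag1 {m n : ℕ} (x : Matrix (Fin m) (Fin m) X) :
    scalarMulRight (scalarMulLeft (inj1 m n) x) (inj1 m n)ᴴ
      = blockDiag x (0 : Matrix (Fin n) (Fin n) X) := by
  rw [inj1_ct, inj1, sml_vcat, sml_one, sml_zero, smr_hcat, smr_one, smr_zero,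
    blockDiag_eq, vcat_zero]

lemma rep_diag2 {m n : ℕ} (y : Matrix (Fin n) (Fin n) X) :
    scalarMulRight (scalarMulLeft (inj2 m n) y) (inj2 m n)ᴴ
      = blockDiag (0 : Matrix (Fin m) (Fin m) X) y := by
  rw [inj2_ct, inj2, sml_vcat, sml_one, sml_zero, smr_hcat, smr_one, smr_zero,
    blockDiag_eq, vcat_zero]

lemma rep_corner {n : ℕ} (x : Matrix (Fin n) (Fin n) X) :
    scalarMulRight (scalarMulLeft (inj1 n n) x) (inj2 n n)ᴴ = cornerBlock x := by
  rw [inj2_ct, inj1, sml_vcat, sml_one, sml_zero, smr_hcat, smr_one, smr_zero,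
    cornerBlock_eq, vcat_zero]

lemma extract_corner {n : ℕ} (x : Matrix (Fin n) (Fin n) X) :
    scalarMulRight (scalarMulLeft (inj1 n n)ᴴ (cornerBlock x)) (inj2 n n) = x := by
  rw [inj1_ct, inj2, cornerBlock_eq', sml_hcat_vcat, sml_one, sml_zero, add_zero,
    smr_hcat_vcat, smr_one, smr_zero', zero_add]

lemma mul3_le {p q c : ℝ} (hp0 : 0 ≤ p) (hp : p ≤ 1) (hq0 : 0 ≤ q) (hq : q ≤ 1)
    (hc : 0 ≤ c) : p * c * q ≤ c := by
  nlinarith [mul_nonneg (mul_nonneg hp0 hc) hq0, mul_nonneg hp0 hc]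

lemma O_corner (OS : OSNorm X) (n : ℕ) (x : Matrix (Fin n) (Fin n) X) :
    OS.O (n + n) (cornerBlock x) = OS.O n x := by
  apply le_antisymm
  · have h := OS.cond_OII n (n + n) (inj1 n n) x (inj2 n n)ᴴ
    rw [rep_corner] at h
    have h1 := matOpNorm_inj1_le n n
    have h2 : matOpNorm ((inj2 n n)ᴴ) ≤ 1 := by rw [matOpNorm_ct]; exact matOpNorm_inj2_le n n
    have h3 := OS.nonneg n x
    have h4 := matOpNorm_nonneg (inj1 n n)
    have h5 := matOpNorm_nonneg ((inj2 n n)ᴴ)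
    exact le_trans h (mul3_le h4 h1 h5 h2 h3)
  · have h := OS.cond_OII (n + n) n ((inj1 n n)ᴴ) (cornerBlock x) (inj2 n n)
    rw [extract_corner] at h
    have h1 : matOpNorm ((inj1 n n)ᴴ) ≤ 1 := by rw [matOpNorm_ct]; exact matOpNorm_inj1_le n n
    have h2 := matOpNorm_inj2_le n n
    have h3 := OS.nonneg (n + n) (cornerBlock x)
    have h4 := matOpNorm_nonneg ((inj1 n n)ᴴ)
    have h5 := matOpNorm_nonneg (inj2 n n)
    exact le_trans h (mul3_le h4 h1 h5 h2 h3)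

lemma Wmax_blockDiag_ge (OS : OSNorm X) {m n : ℕ} (x : Matrix (Fin m) (Fin m) X)
    (y : Matrix (Fin n) (Fin n) X) :
    max (Wmax OS m x) (Wmax OS n y) ≤ Wmax OS (m + n) (blockDiag x y) := by
  have comp1 : Wmax OS m x ≤ Wmax OS (m + n) (blockDiag x y) := by
    by_cases hx : x = 0
    · rw [hx, Wmax_zero]; exact Wmax_nonneg OS _ _
    have hbd : blockDiag x y ≠ 0 := by
      intro h
      apply hx
      rw [← extract1 x y, h, sml_zero', smr_zero']
    refine le_csInf (nonempty_of_ne (OS := OS) hbd) ?_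
    rintro t ⟨r, a, z, b, hbde, hz, ht⟩
    have hmem : (1 / 2) * matOpNorm (((inj1 m n)ᴴ * a) * ((inj1 m n)ᴴ * a)ᴴ
        + (b * inj1 m n)ᴴ * (b * inj1 m n)) ∈ WS OS m x := by
      refine ⟨r, (inj1 m n)ᴴ * a, z, b * inj1 m n, ?_, hz, rfl⟩
      rw [← extract1 x y, hbde, sml_smr_assoc, ← sml_mul, ← smr_mul]
    have h1 := Wmax_le_mem hmem
    have e : ((inj1 m n)ᴴ * a) * ((inj1 m n)ᴴ * a)ᴴ + (b * inj1 m n)ᴴ * (b * inj1 m n)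
        = (inj1 m n)ᴴ * ((a * aᴴ + bᴴ * b) * inj1 m n) := by
      simp only [Matrix.conjTranspose_mul, Matrix.conjTranspose_conjTranspose,
        Matrix.mul_add, Matrix.add_mul, Matrix.mul_assoc]
    have e2 : matOpNorm ((inj1 m n)ᴴ * ((a * aᴴ + bᴴ * b) * inj1 m n))
        ≤ matOpNorm (a * aᴴ + bᴴ * b) := by
      simp only [matOpNorm_eq]
      have q1 := Matrix.l2_opNorm_mul ((inj1 m n)ᴴ) ((a * aᴴ + bᴴ * b) * inj1 m n)
      have q2 := Matrix.l2_opNorm_mul (a * aᴴ + bᴴ * b) (inj1 m n)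
      have q3 : ‖(inj1 m n)ᴴ‖ = ‖inj1 m n‖ := Matrix.l2_opNorm_conjTranspose _
      have n1 := norm_inj1_le m n
      have n2 : (0:ℝ) ≤ ‖a * aᴴ + bᴴ * b‖ := norm_nonneg _
      have n3 : (0:ℝ) ≤ ‖inj1 m n‖ := norm_nonneg _
      have n4 : (0:ℝ) ≤ ‖(a * aᴴ + bᴴ * b) * inj1 m n‖ := norm_nonneg _
      rw [q3] at q1
      nlinarith
    rw [e] at h1
    rw [ht]
    linarith
  have comp2 : Wmax OS n y ≤ Wmax OS (m + n) (blockDiag x y) := by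
    by_cases hy : y = 0
    · rw [hy, Wmax_zero]; exact Wmax_nonneg OS _ _
    have hbd : blockDiag x y ≠ 0 := by
      intro h
      apply hy
      rw [← extract2 x y, h, sml_zero', smr_zero']
    refine le_csInf (nonempty_of_ne (OS := OS) hbd) ?_
    rintro t ⟨r, a, z, b, hbde, hz, ht⟩
    have hmem : (1 / 2) * matOpNorm (((inj2 m n)ᴴ * a) * ((inj2 m n)ᴴ * a)ᴴ
        + (b * inj2 m n)ᴴ * (b * inj2 m n)) ∈ WS OS n y := by
      refine ⟨r, (inj2 m n)ᴴ * a, z, b * inj2 m n, ?_, hz, rfl⟩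
      rw [← extract2 x y, hbde, sml_smr_assoc, ← sml_mul, ← smr_mul]
    have h1 := Wmax_le_mem hmem
    have e : ((inj2 m n)ᴴ * a) * ((inj2 m n)ᴴ * a)ᴴ + (b * inj2 m n)ᴴ * (b * inj2 m n)
        = (inj2 m n)ᴴ * ((a * aᴴ + bᴴ * b) * inj2 m n) := by
      simp only [Matrix.conjTranspose_mul, Matrix.conjTranspose_conjTranspose,
        Matrix.mul_add, Matrix.add_mul, Matrix.mul_assoc]
    have e2 : matOpNorm ((inj2 m n)ᴴ * ((a * aᴴ + bᴴ * b) * inj2 m n))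
        ≤ matOpNorm (a * aᴴ + bᴴ * b) := by
      simp only [matOpNorm_eq]
      have q1 := Matrix.l2_opNorm_mul ((inj2 m n)ᴴ) ((a * aᴴ + bᴴ * b) * inj2 m n)
      have q2 := Matrix.l2_opNorm_mul (a * aᴴ + bᴴ * b) (inj2 m n)
      have q3 : ‖(inj2 m n)ᴴ‖ = ‖inj2 m n‖ := Matrix.l2_opNorm_conjTranspose _
      have n1 := norm_inj2_le m n
      have n2 : (0:ℝ) ≤ ‖a * aᴴ + bᴴ * b‖ := norm_nonneg _
      have n3 : (0:ℝ) ≤ ‖inj2 m n‖ := norm_nonneg _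
      have n4 : (0:ℝ) ≤ ‖(a * aᴴ + bᴴ * b) * inj2 m n‖ := norm_nonneg _
      rw [q3] at q1
      nlinarith
    rw [e] at h1
    rw [ht]
    linarith
  exact max_le comp1 comp2

lemma Wmax_blockDiag_le (OS : OSNorm X) {m n : ℕ} (x : Matrix (Fin m) (Fin m) X)
    (y : Matrix (Fin n) (Fin n) X) :
    Wmax OS (m + n) (blockDiag x y) ≤ max (Wmax OS m x) (Wmax OS n y) := by
  by_cases hx : x = 0
  · rw [hx, ← rep_diag2 (m := m) y]
    have h := Wmax_conj_le OS (inj2 m n) y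
    have h2 := matOpNorm_inj2_le m n
    have h3 := matOpNorm_nonneg (inj2 m n)
    have h4 := Wmax_nonneg OS n y
    have hsq : matOpNorm (inj2 m n) ^ 2 ≤ 1 := by nlinarith
    have h5 : Wmax OS (m + n) (scalarMulRight (scalarMulLeft (inj2 m n) y) (inj2 m n)ᴴ)
        ≤ Wmax OS n y := by nlinarith [mul_nonneg (sub_nonneg.mpr hsq) h4]
    exact le_trans h5 (le_max_right _ _)
  by_cases hy : y = 0
  · rw [hy, ← rep_diag1 (n := n) x]
    have h := Wmax_conj_le OS (inj1 m n) x
    have h2 := matOpNorm_inj1_le m n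
    have h3 := matOpNorm_nonneg (inj1 m n)
    have h4 := Wmax_nonneg OS m x
    have hsq : matOpNorm (inj1 m n) ^ 2 ≤ 1 := by nlinarith
    have h5 : Wmax OS (m + n) (scalarMulRight (scalarMulLeft (inj1 m n) x) (inj1 m n)ᴴ)
        ≤ Wmax OS m x := by nlinarith [mul_nonneg (sub_nonneg.mpr hsq) h4]
    exact le_trans h5 (le_max_left _ _)
  have hne := nonempty_of_ne (OS := OS) hx
  have hne' := nonempty_of_ne (OS := OS) hy
  have key : ∀ t ∈ WS OS m x, ∀ t' ∈ WS OS n y,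
      Wmax OS (m + n) (blockDiag x y) ≤ max t t' := by
    rintro t ⟨r, a, z, b, hxe, hz, ht⟩ t' ⟨r', a', z', b', hye, hz', ht'⟩
    set A : Matrix (Fin (m + n)) (Fin (r + r')) ℂ := vcat (hcat a 0) (hcat 0 a') with hA
    set B : Matrix (Fin (r + r')) (Fin (m + n)) ℂ := vcat (hcat b 0) (hcat 0 b') with hB
    have s1 : scalarMulLeft A (blockDiag z z')
        = vcat (hcat (scalarMulLeft a z) 0) (hcat 0 (scalarMulLeft a' z')) := by
      rw [hA, blockDiag_eq' z z']
      simp only [sml_vcat, sml_hcat_vcat, sml_hcat, sml_zero, sml_zero', add_zero,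
        zero_add, hcat_zero, vcat_zero]
    have s2 : scalarMulRight (vcat (hcat (scalarMulLeft a z) 0)
          (hcat 0 (scalarMulLeft a' z'))) B
        = vcat (hcat (scalarMulRight (scalarMulLeft a z) b) 0)
          (hcat 0 (scalarMulRight (scalarMulLeft a' z') b')) := by
      rw [hB]
      simp only [smr_vcat, smr_hcat_vcat, smr_hcat, smr_zero, smr_zero', add_zero,
        zero_add, hcat_zero, vcat_zero]
    have hrep : blockDiag x y
        = scalarMulRight (scalarMulLeft A (blockDiag z z')) B := by
      rw [s1, s2, blockDiag_eq' x y, hxe, hye]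
    have hmem : (1 / 2) * matOpNorm (A * Aᴴ + Bᴴ * B)
        ∈ WS OS (m + n) (blockDiag x y) := by
      refine ⟨r + r', A, blockDiag z z', B, hrep, ?_, rfl⟩
      rw [OS.cond_OI, hz, hz', max_self]
    have h1 := Wmax_le_mem hmem
    have eA : A * Aᴴ = vcat (hcat (a * aᴴ) 0) (hcat 0 (a' * a'ᴴ)) := by
      rw [hA, vcat_conjTranspose, hcat_conjTranspose, hcat_conjTranspose,
        Matrix.conjTranspose_zero, Matrix.conjTranspose_zero, vcat_mul,
        mul_hcat, mul_hcat, hcat_mul_vcat, hcat_mul_vcat, hcat_mul_vcat, hcat_mul_vcat]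
      simp
    have eB : Bᴴ * B = vcat (hcat (bᴴ * b) 0) (hcat 0 (b'ᴴ * b')) := by
      rw [hB, vcat_conjTranspose, hcat_conjTranspose, hcat_conjTranspose,
        Matrix.conjTranspose_zero, Matrix.conjTranspose_zero, hcat_mul_vcat,
        vcat_mul, vcat_mul, mul_hcat, mul_hcat, mul_hcat, mul_hcat]
      simp [vcat_add, hcat_add, vcat_zero, hcat_zero]
    have esum : A * Aᴴ + Bᴴ * B
        = (Matrix.fromBlocks (a * aᴴ + bᴴ * b) 0 0 (a' * a'ᴴ + b'ᴴ * b')).submatrix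
          finSumFinEquiv.symm finSumFinEquiv.symm := by
      rw [eA, eB, vcat_add, hcat_add, hcat_add, fromBlocks_eq']
      simp
    have hnorm : matOpNorm (A * Aᴴ + Bᴴ * B)
        ≤ max (matOpNorm (a * aᴴ + bᴴ * b)) (matOpNorm (a' * a'ᴴ + b'ᴴ * b')) := by
      rw [esum]
      simp only [matOpNorm_eq]
      exact norm_dsum_le _ _
    rcases le_total t t' with hle | hle
    · have : max t t' = t' := max_eq_right hle
      rw [this]
      have : matOpNorm (a * aᴴ + bᴴ * b) ≤ 2 * t' := by rw [ht] at hle; rw [ht'] at hle ⊢; linarith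
      have h6 : matOpNorm (a' * a'ᴴ + b'ᴴ * b') = 2 * t' := by rw [ht']; ring
      have h7 : matOpNorm (A * Aᴴ + Bᴴ * B) ≤ 2 * t' := by
        rcases max_le_iff.mp (le_refl (max (matOpNorm (a * aᴴ + bᴴ * b))
          (matOpNorm (a' * a'ᴴ + b'ᴴ * b')))) with ⟨_, _⟩
        calc matOpNorm (A * Aᴴ + Bᴴ * B) ≤ _ := hnorm
          _ ≤ 2 * t' := max_le this (le_of_eq h6)
      linarith
    · have : max t t' = t := max_eq_left hle
      rw [this]
      have h5 : matOpNorm (a' * a'ᴴ + b'ᴴ * b') ≤ 2 * t := by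
        rw [ht'] at hle; rw [ht] at hle ⊢; linarith
      have h6 : matOpNorm (a * aᴴ + bᴴ * b) = 2 * t := by rw [ht]; ring
      have h7 : matOpNorm (A * Aᴴ + Bᴴ * B) ≤ 2 * t :=
        le_trans hnorm (max_le (le_of_eq h6) h5)
      linarith
  by_contra hcon
  push_neg at hcon
  obtain ⟨t, htm, htl⟩ := exists_lt_of_csInf_lt hne
    (lt_of_le_of_lt (le_max_left _ _) hcon)
  obtain ⟨t', htm', htl'⟩ := exists_lt_of_csInf_lt hne'
    (lt_of_le_of_lt (le_max_right _ _) hcon)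
  exact absurd (key t htm t' htm') (not_le.mpr (max_lt htl htl'))

end NRAux
end

noncomputable section
namespace NRAux
open Matrix
open scoped Matrix.Norms.L2Operator

variable {X : Type u} [AddCommGroup X] [Module ℂ X]

lemma cornerBlock_zero {n : ℕ} : cornerBlock (0 : Matrix (Fin n) (Fin n) X) = 0 := by
  rw [cornerBlock_eq, vcat_zero, hcat_zero]

lemma Wmax_corner (OS : OSNorm X) (n : ℕ) (x : Matrix (Fin n) (Fin n) X) :
    Wmax OS (n + n) (cornerBlock x) = (1 / 2) * OS.O n x := by
  by_cases hx : x = 0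
  · rw [hx, cornerBlock_zero, Wmax_zero, (OS.eq_zero_iff n 0).mpr rfl, mul_zero]
  have hn : 0 < n := by
    rcases Nat.eq_zero_or_pos n with h | h
    · exfalso
      apply hx
      subst h
      ext i j
      exact i.elim0
    · exact h
  set c := OS.O n x with hc
  have hc0 : 0 < c :=
    lt_of_le_of_ne (OS.nonneg n x) fun h => hx ((OS.eq_zero_iff n x).mp h.symm)
  set s : ℂ := ((Real.sqrt c : ℝ) : ℂ) with hs
  have hsconj : star s = s := by rw [hs, Complex.star_def, Complex.conj_ofReal]
  have hss : s * s = (c : ℂ) := by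
    rw [hs, ← Complex.ofReal_mul, Real.mul_self_sqrt hc0.le]
  refine le_antisymm ?_ ?_
  · -- upper bound via explicit decomposition
    have hmem : (1 / 2) * matOpNorm ((s • inj1 n n) * (s • inj1 n n)ᴴ
        + (s • (inj2 n n)ᴴ)ᴴ * (s • (inj2 n n)ᴴ)) ∈ WS OS (n + n) (cornerBlock x) := by
      refine ⟨n, s • inj1 n n, ((c : ℂ))⁻¹ • x, s • (inj2 n n)ᴴ, ?_, ?_, rfl⟩
      · rw [sml_smul, sml_smul', smr_smul, smr_smul', smr_smul', rep_corner, smul_smul,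
          smul_smul, hss, mul_inv_cancel₀ ((Complex.ofReal_ne_zero).mpr hc0.ne'), one_smul]
      · rw [OS.smul_eq, ← hc]
        have : ‖((c : ℂ))⁻¹‖ = c⁻¹ := by
          rw [norm_inv, Complex.norm_real, Real.norm_eq_abs, abs_of_pos hc0]
        rw [this, inv_mul_cancel₀ hc0.ne']
    have hval : (s • inj1 n n) * (s • inj1 n n)ᴴ + (s • (inj2 n n)ᴴ)ᴴ * (s • (inj2 n n)ᴴ)
        = (c : ℂ) • (1 : Matrix (Fin (n + n)) (Fin (n + n)) ℂ) := by
      rw [Matrix.conjTranspose_smul, Matrix.conjTranspose_smul,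
        Matrix.conjTranspose_conjTranspose, Matrix.smul_mul, Matrix.mul_smul,
        Matrix.smul_mul, Matrix.mul_smul, smul_smul, smul_smul, hsconj, hss,
        ← smul_add, inj_mul_ct_add]
    have hnorm : matOpNorm ((c : ℂ) • (1 : Matrix (Fin (n + n)) (Fin (n + n)) ℂ)) = c := by
      rw [matOpNorm_eq, norm_smul, matrix_norm_one_eq (by omega), mul_one,
        Complex.norm_real, Real.norm_eq_abs, abs_of_pos hc0]
    have := Wmax_le_mem hmem
    rw [hval, hnorm] at this
    exact this
  · have h := Wmax_lb OS (n + n) (cornerBlock x)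
    rw [O_corner] at h
    exact h

end NRAux
end


/-- `𝒲_max` satisfies (OW): `𝒲_max([[0,x],[0,0]]) = (1/2) 𝒪_n(x)`; consequently
`𝒲_max` is a numerical radius norm affiliated with `(X, 𝒪_n)`. -/
theorem stmt_9 {X : Type u} [AddCommGroup X] [Module ℂ X] (OS : OSNorm X) :
    (∀ (n : ℕ) (x : Matrix (Fin n) (Fin n) X),
      Wmax OS (n + n) (cornerBlock x) = (1 / 2) * OS.O n x) ∧
    ∃ WN : NRNorm X, ∀ (n : ℕ) (x : Matrix (Fin n) (Fin n) X),
      WN.W n x = Wmax OS n x := by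
  constructor
  · exact fun n x => NRAux.Wmax_corner OS n x
  · refine ⟨⟨Wmax OS, NRAux.Wmax_nonneg OS, NRAux.Wmax_eq_zero_iff OS,
      NRAux.Wmax_add_le OS, NRAux.Wmax_smul OS, ?_, ?_⟩, fun n x => rfl⟩
    · intro m n x y
      exact le_antisymm (NRAux.Wmax_blockDiag_le OS x y) (NRAux.Wmax_blockDiag_ge OS x y)
    · intro m n α x
      exact NRAux.Wmax_conj_le OS α x
end

section
/- Let (X, 𝒪_n) be an operator space and let 𝒲_n be any numerical radius norm affiliated with (X, 𝒪_n). Then 𝒲_n(x) ≤ 𝒲_max(x) for every n ≥ 1 and every x ∈ M_n(X); that is, 𝒲_max is the maximal numerical radius norm affiliated with (X, 𝒪_n). -/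
open scoped ComplexOrder Matrix ENNReal TensorProduct

universe u v

open scoped Matrix.Norms.L2Operator in
lemma matOpNorm_eq' {m n : ℕ} (α : Matrix (Fin m) (Fin n) ℂ) : matOpNorm α = ‖α‖ := rfl

open scoped Matrix.Norms.L2Operator in
lemma matOpNorm_mul_conjTranspose_self {m n : ℕ} (α : Matrix (Fin m) (Fin n) ℂ) :
    matOpNorm (α * αᴴ) = matOpNorm α ^ 2 := by
  rw [matOpNorm_eq', matOpNorm_eq']
  have := Matrix.l2_opNorm_conjTranspose_mul_self (αᴴ)
  rw [Matrix.conjTranspose_conjTranspose, Matrix.l2_opNorm_conjTranspose] at this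
  rw [this, sq]

lemma matOpNorm_nonneg {m n : ℕ} (α : Matrix (Fin m) (Fin n) ℂ) : 0 ≤ matOpNorm α :=
  norm_nonneg _

lemma sum_fin_add {M : Type*} [AddCommMonoid M] {m n : ℕ} (f : Fin (m + n) → M) :
    ∑ l, f l = (∑ p : Fin m, f (finSumFinEquiv (Sum.inl p)))
      + ∑ q : Fin n, f (finSumFinEquiv (Sum.inr q)) := by
  rw [← Equiv.sum_comp finSumFinEquiv f, Fintype.sum_sum_type]

def auxAlpha {n r : ℕ} (a : Matrix (Fin n) (Fin r) ℂ) (b : Matrix (Fin r) (Fin n) ℂ) :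
    Matrix (Fin n) (Fin (r + r)) ℂ :=
  Matrix.of fun i j => Sum.elim (fun k => a i k) (fun k => star (b k i)) (finSumFinEquiv.symm j)

lemma auxAlpha_mul {n r : ℕ} (a : Matrix (Fin n) (Fin r) ℂ) (b : Matrix (Fin r) (Fin n) ℂ) :
    auxAlpha a b * (auxAlpha a b)ᴴ = a * aᴴ + bᴴ * b := by
  ext i j
  simp only [Matrix.mul_apply, Matrix.add_apply, Matrix.conjTranspose_apply, auxAlpha,
    Matrix.of_apply]
  rw [sum_fin_add (fun l => Sum.elim (fun k => a i k) (fun k => star (b k i))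
    (finSumFinEquiv.symm l) * star (Sum.elim (fun k => a j k) (fun k => star (b k j))
    (finSumFinEquiv.symm l)))]
  simp only [Equiv.symm_apply_apply, Sum.elim_inl, Sum.elim_inr]
  simp [mul_comm]

lemma auxAlpha_prod {X : Type u} [AddCommGroup X] [Module ℂ X] {n r : ℕ}
    (a : Matrix (Fin n) (Fin r) ℂ) (b : Matrix (Fin r) (Fin n) ℂ)
    (y : Matrix (Fin r) (Fin r) X) :
    scalarMulRight (scalarMulLeft (auxAlpha a b) (cornerBlock y)) (auxAlpha a b)ᴴ
      = scalarMulRight (scalarMulLeft a y) b := by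
  ext i j
  simp only [scalarMulRight, scalarMulLeft, cornerBlock, Matrix.of_apply,
    Matrix.submatrix_apply, Matrix.conjTranspose_apply, auxAlpha]
  rw [sum_fin_add (fun l => star (Sum.elim (fun k => a j k) (fun k => star (b k j))
    (finSumFinEquiv.symm l)) • ∑ l', (Sum.elim (fun k => a i k) (fun k => star (b k i))
    (finSumFinEquiv.symm l')) • (Matrix.fromBlocks 0 y 0 0)
    (finSumFinEquiv.symm l') (finSumFinEquiv.symm l))]
  have hinner : ∀ s : Fin r ⊕ Fin r,
      (∑ l', (Sum.elim (fun k => a i k) (fun k => star (b k i))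
        (finSumFinEquiv.symm l')) • (Matrix.fromBlocks 0 y 0 0 :
          Matrix (Fin r ⊕ Fin r) (Fin r ⊕ Fin r) X)
        (finSumFinEquiv.symm l') s)
      = Sum.elim (fun _ : Fin r => (0 : X)) (fun q => ∑ p, a i p • y p q) s := by
    intro s
    rw [sum_fin_add (fun l' => (Sum.elim (fun k => a i k) (fun k => star (b k i))
      (finSumFinEquiv.symm l')) • (Matrix.fromBlocks 0 y 0 0 :
        Matrix (Fin r ⊕ Fin r) (Fin r ⊕ Fin r) X) (finSumFinEquiv.symm l') s)]
    cases s with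
    | inl p => simp only [Equiv.symm_apply_apply, Sum.elim_inl, Sum.elim_inr]; simp
    | inr q => simp only [Equiv.symm_apply_apply, Sum.elim_inl, Sum.elim_inr]; simp
  simp only [Equiv.symm_apply_apply] at *
  simp only [hinner, Sum.elim_inl, Sum.elim_inr]
  simp

section AuxProof
variable {X : Type u} [AddCommGroup X] [Module ℂ X]

lemma main_bound (OS : OSNorm X) (WN : NRNorm X)
    (hOW : ∀ (n : ℕ) (x : Matrix (Fin n) (Fin n) X),
      WN.W (n + n) (cornerBlock x) = (1 / 2) * OS.O n x)
    {n r : ℕ} (a : Matrix (Fin n) (Fin r) ℂ) (y : Matrix (Fin r) (Fin r) X)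
    (b : Matrix (Fin r) (Fin n) ℂ) (hOy : OS.O r y = 1) :
    WN.W n (scalarMulRight (scalarMulLeft a y) b)
      ≤ (1 / 2) * matOpNorm (a * aᴴ + bᴴ * b) := by
  have h1 := WN.cond_WII (r + r) n (auxAlpha a b) (cornerBlock y)
  rw [auxAlpha_prod, hOW, hOy, ← matOpNorm_mul_conjTranspose_self, auxAlpha_mul] at h1
  calc WN.W n (scalarMulRight (scalarMulLeft a y) b)
      ≤ matOpNorm (a * aᴴ + bᴴ * b) * (1 / 2 * 1) := h1
    _ = (1 / 2) * matOpNorm (a * aᴴ + bᴴ * b) := by ring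

end AuxProof

/-- any numerical radius norm `𝒲` affiliated with an operator space `(X, 𝒪_n)`
(i.e. satisfying (WI), (WII) and (OW)) is dominated by `𝒲_max`. -/
theorem stmt_10 {X : Type u} [AddCommGroup X] [Module ℂ X] (OS : OSNorm X) (WN : NRNorm X)
    (hOW : ∀ (n : ℕ) (x : Matrix (Fin n) (Fin n) X),
      WN.W (n + n) (cornerBlock x) = (1 / 2) * OS.O n x) :
    ∀ (n : ℕ) (x : Matrix (Fin n) (Fin n) X), WN.W n x ≤ Wmax OS n x := by
  intro n x
  by_cases hx : x = 0
  · subst hx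
    rw [(WN.eq_zero_iff n 0).mpr rfl]
    apply Real.sInf_nonneg
    rintro t ⟨r, a, y, b, -, -, rfl⟩
    have := matOpNorm_nonneg (a * aᴴ + bᴴ * b)
    linarith
  · apply le_csInf
    · set c : ℝ := OS.O n x with hc
      have hcpos : 0 < c :=
        lt_of_le_of_ne (OS.nonneg n x) fun h => hx ((OS.eq_zero_iff n x).mp h.symm)
      have hcz : (c : ℂ) ≠ 0 := by exact_mod_cast Complex.ofReal_ne_zero.mpr hcpos.ne'
      refine ⟨_, n, (c : ℂ) • 1, ((c : ℂ)⁻¹) • x, 1, ?_, ?_, rfl⟩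
      · ext i j
        simp only [scalarMulRight, scalarMulLeft, Matrix.of_apply, Matrix.smul_apply,
          Matrix.one_apply, smul_ite, ite_smul, smul_zero, zero_smul,
          Finset.sum_ite_eq, Finset.sum_ite_eq', Finset.mem_univ, if_true, smul_smul]
        simp [ite_mul, smul_eq_mul, ite_smul, mul_inv_cancel₀ hcz]
      · rw [OS.smul_eq]
        simp only [norm_inv, Complex.norm_real]
        rw [Real.norm_of_nonneg hcpos.le, ← hc, inv_mul_cancel₀ hcpos.ne']
    · rintro t ⟨r, a, y, b, hxab, hOy, rfl⟩
      rw [hxab]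
      exact main_bound OS WN hOW a y b hOy
end
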